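/- arXiv:1102.0921 — 2 statements merged into one kernel-verified Lean document; each statement's English description precedes it below -/
import Mathlib

section
/- Let α, β, α₀, β₁ ∈ ℝ. Let f ∈ ℝ[[X]] satisfy f(0) = 0 and f' = 1 + α·f + β·f², and let g ∈ ℝ[[X]] satisfy g(0) = 1 and g' = (α₀ + β₁·f)·g. Let f̄ be the compositional inverse of f, h = (g∘f̄)⁻¹, and p_n(X) = ∑_{k=0}^{n} (n!/k!)·([Xⁿ](h·f̄ᵏ))·Xᵏ ∈ ℝ[X]. If 𝓛 : ℝ[X] → ℝ is any linear functional with 𝓛(p_0) = 1 and 𝓛(p_i) = 0 for all i ≥ 1, then for every n ∈ ℕ, 𝓛(Xⁿ) = n!·[Xⁿ]g. In other words, the moments μ_n of the orthogonal polynomial family whose coefficient array is [g,f]⁻¹ are given by the entries n!·[Xⁿ]g of the first column of the exponential Riordan array [g,f]. -/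
/-- Substitution (composition) of formal power series: `psComp h u = h ∘ u`,
the series obtained by substituting `u` (with zero constant term) into `h`. -/
noncomputable def psComp (h u : PowerSeries ℝ) : PowerSeries ℝ :=
  PowerSeries.mk fun n =>
    ∑ k ∈ Finset.range (n + 1), PowerSeries.coeff (R := ℝ) k h * PowerSeries.coeff (R := ℝ) n (u ^ k)

open PowerSeries Finset

lemma psc_coeff_pow_eq_zero {u : PowerSeries ℝ} (hu : constantCoeff (R := ℝ) u = 0) :
    ∀ {k n : ℕ}, n < k → coeff (R := ℝ) n (u ^ k) = 0 := by
  intro k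
  induction k with
  | zero => intro n h; omega
  | succ k ih =>
    intro n h
    rw [pow_succ, coeff_mul]
    apply Finset.sum_eq_zero
    rintro ⟨i, j⟩ hij
    rw [Finset.HasAntidiagonal.mem_antidiagonal] at hij
    by_cases hj : j = 0
    · subst hj
      simp [coeff_zero_eq_constantCoeff, hu]
    · rw [ih (by omega), zero_mul]

lemma psc_coeff_mul_pow_eq_zero {u : PowerSeries ℝ} (hu : constantCoeff (R := ℝ) u = 0)
    (a : PowerSeries ℝ) {n k : ℕ} (h : n < k) : coeff (R := ℝ) n (a * u ^ k) = 0 := by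
  rw [coeff_mul]
  apply Finset.sum_eq_zero
  rintro ⟨i, j⟩ hij
  rw [Finset.HasAntidiagonal.mem_antidiagonal] at hij
  rw [psc_coeff_pow_eq_zero hu (by omega), mul_zero]

lemma psc_coeff (h u : PowerSeries ℝ) (n : ℕ) :
    coeff (R := ℝ) n (psComp h u) = ∑ k ∈ range (n + 1), coeff (R := ℝ) k h * coeff (R := ℝ) n (u ^ k) := by
  simp [psComp]

lemma psc_coeff' {u : PowerSeries ℝ} (hu : constantCoeff (R := ℝ) u = 0) (h : PowerSeries ℝ)
    {n N : ℕ} (hnN : n < N) :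
    coeff (R := ℝ) n (psComp h u) = ∑ k ∈ range N, coeff (R := ℝ) k h * coeff (R := ℝ) n (u ^ k) := by
  rw [psc_coeff]
  apply Finset.sum_subset
  · exact Finset.range_subset_range.2 (by omega)
  · intro k hk hk'
    rw [Finset.mem_range] at hk hk'
    rw [psc_coeff_pow_eq_zero hu (by omega), mul_zero]

lemma psc_coeff_zero (h u : PowerSeries ℝ) :
    coeff (R := ℝ) 0 (psComp h u) = coeff (R := ℝ) 0 h := by
  simp [psc_coeff]

lemma psc_coeff_aeval_trunc (u c : PowerSeries ℝ) {n N : ℕ} (hnN : n < N) :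
    coeff (R := ℝ) n (Polynomial.aeval u (trunc N c)) =
      ∑ k ∈ range N, coeff (R := ℝ) k c * coeff (R := ℝ) n (u ^ k) := by
  obtain ⟨M, rfl⟩ : ∃ M, N = M + 1 := ⟨N - 1, by omega⟩
  rw [Polynomial.aeval_eq_sum_range' (natDegree_trunc_lt c M) u, map_sum]
  apply Finset.sum_congr rfl
  intro k hk
  rw [Finset.mem_range] at hk
  rw [LinearMap.map_smul, smul_eq_mul, coeff_trunc, if_pos hk]

lemma psc_coeff_mul_congr {a a' b b' : PowerSeries ℝ} {n : ℕ}
    (ha : ∀ i ≤ n, coeff (R := ℝ) i a = coeff (R := ℝ) i a') (hb : ∀ i ≤ n, coeff (R := ℝ) i b = coeff (R := ℝ) i b') :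
    coeff (R := ℝ) n (a * b) = coeff (R := ℝ) n (a' * b') := by
  rw [coeff_mul, coeff_mul]
  apply Finset.sum_congr rfl
  rintro ⟨i, j⟩ hij
  rw [Finset.HasAntidiagonal.mem_antidiagonal] at hij
  rw [ha i (by omega), hb j (by omega)]

lemma psc_coeff_aeval_congr {u : PowerSeries ℝ} (hu : constantCoeff (R := ℝ) u = 0)
    {P Q : Polynomial ℝ} {n N : ℕ} (hnN : n < N)
    (hPQ : ∀ d < N, P.coeff d = Q.coeff d) :
    coeff (R := ℝ) n (Polynomial.aeval u P) = coeff (R := ℝ) n (Polynomial.aeval u Q) := by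
  set D := max P.natDegree Q.natDegree + N + 1 with hD
  have hP : P.natDegree < D := by omega
  have hQ : Q.natDegree < D := by omega
  rw [Polynomial.aeval_eq_sum_range' hP u, Polynomial.aeval_eq_sum_range' hQ u,
    map_sum, map_sum]
  apply Finset.sum_congr rfl
  intro k _
  by_cases hk : k < N
  · rw [hPQ k hk]
  · rw [LinearMap.map_smul, LinearMap.map_smul,
      psc_coeff_pow_eq_zero hu (show n < k by omega), smul_zero, smul_zero]

lemma psc_mul {u : PowerSeries ℝ} (hu : constantCoeff (R := ℝ) u = 0) (a b : PowerSeries ℝ) :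
    psComp (a * b) u = psComp a u * psComp b u := by
  ext n
  have h1 : coeff (R := ℝ) n (psComp (a * b) u)
      = coeff (R := ℝ) n (Polynomial.aeval u (trunc (n + 1) (a * b))) := by
    rw [psc_coeff_aeval_trunc u _ (Nat.lt_succ_self n), psc_coeff]
  have h2 : coeff (R := ℝ) n (Polynomial.aeval u (trunc (n + 1) (a * b)))
      = coeff (R := ℝ) n (Polynomial.aeval u (trunc (n + 1) a * trunc (n + 1) b)) := by
    apply psc_coeff_aeval_congr hu (Nat.lt_succ_self n)
    intro d hd
    rw [coeff_trunc, if_pos hd, PowerSeries.coeff_mul, Polynomial.coeff_mul]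
    apply Finset.sum_congr rfl
    rintro ⟨i, j⟩ hij
    rw [Finset.HasAntidiagonal.mem_antidiagonal] at hij
    rw [coeff_trunc, coeff_trunc, if_pos (by omega), if_pos (by omega)]
  rw [h1, h2, map_mul]
  apply psc_coeff_mul_congr
  · intro i hi
    rw [psc_coeff_aeval_trunc u a (show i < n + 1 by omega),
      psc_coeff' hu a (show i < n + 1 by omega)]
  · intro i hi
    rw [psc_coeff_aeval_trunc u b (show i < n + 1 by omega),
      psc_coeff' hu b (show i < n + 1 by omega)]

lemma psc_one (u : PowerSeries ℝ) : psComp 1 u = 1 := by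
  ext n
  rw [psc_coeff]
  rw [Finset.sum_eq_single 0]
  · simp
  · intro k _ hk
    rw [coeff_one, if_neg hk, zero_mul]
  · intro h; exact absurd (Finset.mem_range.2 (by omega)) h

lemma psc_pow {u : PowerSeries ℝ} (hu : constantCoeff (R := ℝ) u = 0) (a : PowerSeries ℝ) (k : ℕ) :
    psComp (a ^ k) u = (psComp a u) ^ k := by
  induction k with
  | zero => simpa using psc_one u
  | succ k ih => rw [pow_succ, pow_succ, psc_mul hu, ih]

lemma psc_X_left {u : PowerSeries ℝ} (hu : constantCoeff (R := ℝ) u = 0) : psComp X u = u := by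
  ext n
  rw [psc_coeff, Finset.sum_eq_single 1]
  · simp
  · intro k _ hk
    rw [coeff_X, if_neg hk, zero_mul]
  · intro h
    rw [Finset.mem_range, not_lt] at h
    have hn0 : n = 0 := by omega
    subst hn0
    simp [coeff_zero_eq_constantCoeff, hu]

lemma psc_X_right (h : PowerSeries ℝ) : psComp h X = h := by
  ext n
  rw [psc_coeff, Finset.sum_eq_single n]
  · simp
  · intro k _ hk
    rw [coeff_X_pow, if_neg (fun hh => hk hh.symm), mul_zero]
  · intro hn; exact absurd (Finset.mem_range.2 (by omega)) hn

lemma psc_assoc {u v : PowerSeries ℝ} (hu : constantCoeff (R := ℝ) u = 0)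
    (hv : constantCoeff (R := ℝ) v = 0) (a : PowerSeries ℝ) :
    psComp (psComp a u) v = psComp a (psComp u v) := by
  have hw : constantCoeff (R := ℝ) (psComp u v) = 0 := by
    rw [← coeff_zero_eq_constantCoeff, psc_coeff_zero, coeff_zero_eq_constantCoeff, hu]
  ext n
  rw [psc_coeff (psComp a u) v n]
  calc ∑ k ∈ range (n + 1), coeff (R := ℝ) k (psComp a u) * coeff (R := ℝ) n (v ^ k)
      = ∑ k ∈ range (n + 1), ∑ i ∈ range (n + 1),
          coeff (R := ℝ) i a * coeff (R := ℝ) k (u ^ i) * coeff (R := ℝ) n (v ^ k) := by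
        apply Finset.sum_congr rfl
        intro k hk
        rw [Finset.mem_range] at hk
        rw [psc_coeff' hu a hk, Finset.sum_mul]
    _ = ∑ i ∈ range (n + 1), coeff (R := ℝ) i a *
          ∑ k ∈ range (n + 1), coeff (R := ℝ) k (u ^ i) * coeff (R := ℝ) n (v ^ k) := by
        rw [Finset.sum_comm]
        apply Finset.sum_congr rfl
        intro i _
        rw [Finset.mul_sum]
        apply Finset.sum_congr rfl
        intro k _
        ring
    _ = ∑ i ∈ range (n + 1), coeff (R := ℝ) i a * coeff (R := ℝ) n ((psComp u v) ^ i) := by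
        apply Finset.sum_congr rfl
        intro i _
        rw [← psc_coeff (u ^ i) v n, psc_pow hv]
    _ = coeff (R := ℝ) n (psComp a (psComp u v)) := (psc_coeff a (psComp u v) n).symm

lemma psc_coeff_mul_psComp {f : PowerSeries ℝ} (hf : constantCoeff (R := ℝ) f = 0)
    (g w : PowerSeries ℝ) (n : ℕ) :
    coeff (R := ℝ) n (g * psComp w f) = ∑ k ∈ range (n + 1), coeff (R := ℝ) k w * coeff (R := ℝ) n (g * f ^ k) := by
  rw [coeff_mul]
  calc ∑ p ∈ antidiagonal n, coeff (R := ℝ) p.1 g * coeff (R := ℝ) p.2 (psComp w f)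
      = ∑ p ∈ antidiagonal n, ∑ k ∈ range (n + 1),
          coeff (R := ℝ) k w * (coeff (R := ℝ) p.1 g * coeff (R := ℝ) p.2 (f ^ k)) := by
        apply Finset.sum_congr rfl
        rintro ⟨i, j⟩ hij
        rw [Finset.HasAntidiagonal.mem_antidiagonal] at hij
        rw [psc_coeff' hf w (show j < n + 1 by omega), Finset.mul_sum]
        apply Finset.sum_congr rfl
        intro k _
        ring
    _ = ∑ k ∈ range (n + 1), coeff (R := ℝ) k w *
          ∑ p ∈ antidiagonal n, coeff (R := ℝ) p.1 g * coeff (R := ℝ) p.2 (f ^ k) := by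
        rw [Finset.sum_comm]
        apply Finset.sum_congr rfl
        intro k _
        rw [Finset.mul_sum]
    _ = ∑ k ∈ range (n + 1), coeff (R := ℝ) k w * coeff (R := ℝ) n (g * f ^ k) := by
        apply Finset.sum_congr rfl
        intro k _
        rw [coeff_mul]

lemma psc_coeff_pow_congr {u v : PowerSeries ℝ} (l : ℕ) :
    ∀ j : ℕ, (∀ m ≤ j, coeff (R := ℝ) m u = coeff (R := ℝ) m v) → coeff (R := ℝ) j (u ^ l) = coeff (R := ℝ) j (v ^ l) := by
  induction l with
  | zero => intro j _; rfl
  | succ l ih =>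
    intro j h
    rw [pow_succ, pow_succ, coeff_mul, coeff_mul]
    apply Finset.sum_congr rfl
    rintro ⟨a, b⟩ hab
    rw [Finset.HasAntidiagonal.mem_antidiagonal] at hab
    rw [ih a (fun m hm => h m (by omega)), h b (by omega)]

lemma psc_coeff_pow_congr' {u v : PowerSeries ℝ} (hu : constantCoeff (R := ℝ) u = 0)
    (hv : constantCoeff (R := ℝ) v = 0) {n : ℕ} (hlt : ∀ m < n, coeff (R := ℝ) m u = coeff (R := ℝ) m v)
    {k : ℕ} (hk : 2 ≤ k) : coeff (R := ℝ) n (u ^ k) = coeff (R := ℝ) n (v ^ k) := by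
  obtain ⟨k', rfl⟩ : ∃ k', k = k' + 1 := ⟨k - 1, by omega⟩
  have hk' : 1 ≤ k' := by omega
  rw [pow_succ, pow_succ, coeff_mul, coeff_mul]
  apply Finset.sum_congr rfl
  rintro ⟨a, b⟩ hab
  rw [Finset.HasAntidiagonal.mem_antidiagonal] at hab
  by_cases hb : b = 0
  · subst hb
    simp only [coeff_zero_eq_constantCoeff, hu, hv, mul_zero]
  · have hbn : b ≤ n := by omega
    by_cases hbn' : b = n
    · have ha : a = 0 := by omega
      subst ha
      have h1 : coeff (R := ℝ) 0 (u ^ k') = 0 := by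
        rw [coeff_zero_eq_constantCoeff, map_pow, hu, zero_pow (by omega)]
      have h2 : coeff (R := ℝ) 0 (v ^ k') = 0 := by
        rw [coeff_zero_eq_constantCoeff, map_pow, hv, zero_pow (by omega)]
      rw [h1, h2, zero_mul, zero_mul]
    · have han : a < n := by omega
      rw [psc_coeff_pow_congr k' a (fun m hm => hlt m (by omega)), hlt b (by omega)]

lemma psc_inj {f u v : PowerSeries ℝ} (hf1 : coeff (R := ℝ) 1 f = 1)
    (hu : constantCoeff (R := ℝ) u = 0) (hv : constantCoeff (R := ℝ) v = 0)
    (heq : psComp f u = psComp f v) : u = v := by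
  ext n
  induction n using Nat.strong_induction_on with
  | _ n ih =>
    rcases Nat.eq_zero_or_pos n with hn | hn
    · subst hn
      rw [coeff_zero_eq_constantCoeff, hu, hv]
    · have hc := congrArg (coeff (R := ℝ) n) heq
      rw [psc_coeff, psc_coeff] at hc
      have h1 : (1 : ℕ) ∈ range (n + 1) := Finset.mem_range.2 (by omega)
      rw [← Finset.add_sum_erase _ _ h1, ← Finset.add_sum_erase _ _ h1] at hc
      have hrest : ∑ k ∈ (range (n + 1)).erase 1, coeff (R := ℝ) k f * coeff (R := ℝ) n (u ^ k)
          = ∑ k ∈ (range (n + 1)).erase 1, coeff (R := ℝ) k f * coeff (R := ℝ) n (v ^ k) := by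
        apply Finset.sum_congr rfl
        intro k hk
        rw [Finset.mem_erase, Finset.mem_range] at hk
        rcases Nat.eq_zero_or_pos k with hk0 | hkpos
        · subst hk0; rw [pow_zero, pow_zero]
        · have hk2 : 2 ≤ k := by omega
          rw [psc_coeff_pow_congr' hu hv ih hk2]
      rw [hrest] at hc
      have := add_right_cancel hc
      rw [pow_one, pow_one, hf1, one_mul, one_mul] at this
      exact this

/-- If the exponential Riordan array `L = [g, f]` has tridiagonal production matrix,
then the moments of the orthogonal polynomial family whose coefficient array is
`L⁻¹ = [1/(g∘f̄), f̄]` are the entries `n!·[xⁿ]g` of the first column of `L`. -/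
theorem exp_riordan_moments_first_column (α β α₀ β₁ : ℝ)
    (f g fbar h : PowerSeries ℝ)
    (hf0 : PowerSeries.constantCoeff (R := ℝ) f = 0)
    (hf' : PowerSeries.derivative ℝ f = 1 + PowerSeries.C (R := ℝ) α * f + PowerSeries.C (R := ℝ) β * f ^ 2)
    (hg0 : PowerSeries.constantCoeff (R := ℝ) g = 1)
    (hg' : PowerSeries.derivative ℝ g = (PowerSeries.C (R := ℝ) α₀ + PowerSeries.C (R := ℝ) β₁ * f) * g)
    (hfbar0 : PowerSeries.constantCoeff (R := ℝ) fbar = 0)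
    (hfbar : psComp f fbar = PowerSeries.X)
    (hh : h = (psComp g fbar)⁻¹)
    (p : ℕ → Polynomial ℝ)
    (hp : ∀ n, p n = ∑ k ∈ Finset.range (n + 1),
      Polynomial.C (((n.factorial : ℝ) / (k.factorial : ℝ)) *
        PowerSeries.coeff (R := ℝ) n (h * fbar ^ k)) * Polynomial.X ^ k)
    (𝓛 : Polynomial ℝ →ₗ[ℝ] ℝ)
    (hL0 : 𝓛 (p 0) = 1)
    (hL : ∀ i, 1 ≤ i → 𝓛 (p i) = 0) :
    ∀ n, 𝓛 (Polynomial.X ^ n) = (n.factorial : ℝ) * PowerSeries.coeff (R := ℝ) n g := by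
  -- the linear coefficient of f is 1
  have hf1 : coeff (R := ℝ) 1 f = 1 := by
    have hc := congrArg (coeff (R := ℝ) 0) hf'
    rw [PowerSeries.coeff_derivative] at hc
    simp only [map_add, coeff_zero_eq_constantCoeff, map_one, map_mul, map_pow,
      constantCoeff_C, hf0, mul_zero, zero_pow, add_zero, Nat.cast_zero, zero_add,
      mul_one] at hc
    simpa using hc
  -- fbar is a two-sided compositional inverse of f
  have hfbar_f : psComp fbar f = PowerSeries.X := by
    have hw0 : constantCoeff (R := ℝ) (psComp fbar f) = 0 := by
      rw [← coeff_zero_eq_constantCoeff, psc_coeff_zero, coeff_zero_eq_constantCoeff, hfbar0]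
    apply psc_inj hf1 hw0 PowerSeries.constantCoeff_X
    rw [psc_X_right, ← psc_assoc hfbar0 hf0 f, hfbar, psc_X_left hf0]
  -- key identity: g * (h ∘ f) = 1
  have hG0 : constantCoeff (R := ℝ) (psComp g fbar) ≠ 0 := by
    rw [← coeff_zero_eq_constantCoeff, psc_coeff_zero, coeff_zero_eq_constantCoeff, hg0]
    exact one_ne_zero
  have hkey : g * psComp h f = 1 := by
    have h1 : h * psComp g fbar = 1 := by
      rw [hh]; exact PowerSeries.inv_mul_cancel _ hG0
    have h2 : psComp (h * psComp g fbar) f = 1 := by rw [h1, psc_one]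
    rw [psc_mul hf0, psc_assoc hfbar0 hf0 g, hfbar_f, psc_X_right] at h2
    rw [mul_comm]
    exact h2
  have hkey2 : ∀ m : ℕ, g * psComp (h * fbar ^ m) f = PowerSeries.X ^ m := by
    intro m
    rw [psc_mul hf0, psc_pow hf0, hfbar_f, ← mul_assoc, hkey, one_mul]
  -- coefficients of p k
  have hpc : ∀ k m : ℕ, (p k).coeff m = if m ≤ k then
      ((k.factorial : ℝ) / (m.factorial : ℝ)) * coeff (R := ℝ) k (h * fbar ^ m) else 0 := by
    intro k m
    rw [hp k, Polynomial.finset_sum_coeff]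
    have hterm : ∀ j ∈ range (k + 1),
        (Polynomial.C (((k.factorial : ℝ) / (j.factorial : ℝ)) * coeff (R := ℝ) k (h * fbar ^ j))
          * Polynomial.X ^ j).coeff m
        = if m = j then ((k.factorial : ℝ) / (j.factorial : ℝ)) * coeff (R := ℝ) k (h * fbar ^ j)
          else 0 := by
      intro j _
      rw [Polynomial.coeff_C_mul, Polynomial.coeff_X_pow]
      split <;> simp
    rw [Finset.sum_congr rfl hterm, Finset.sum_ite_eq (range (k + 1)) m _]
    simp [Nat.lt_succ_iff]
  -- the matrix inversion identity: Xⁿ = ∑ₖ bₙₖ • pₖ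
  have hXn : ∀ n : ℕ, (Polynomial.X : Polynomial ℝ) ^ n
      = ∑ k ∈ range (n + 1),
          (((n.factorial : ℝ) / (k.factorial : ℝ)) * coeff (R := ℝ) n (g * f ^ k)) • p k := by
    intro n
    apply Polynomial.ext
    intro m
    rw [Polynomial.coeff_X_pow, Polynomial.finset_sum_coeff]
    simp only [Polynomial.coeff_smul, smul_eq_mul]
    by_cases hmn : m ≤ n
    · have hterm : ∀ k ∈ range (n + 1),
          ((n.factorial : ℝ) / (k.factorial : ℝ)) * coeff (R := ℝ) n (g * f ^ k) * (p k).coeff m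
          = ((n.factorial : ℝ) / (m.factorial : ℝ)) *
              (coeff (R := ℝ) k (h * fbar ^ m) * coeff (R := ℝ) n (g * f ^ k)) := by
        intro k hk
        rw [hpc k m]
        by_cases hmk : m ≤ k
        · rw [if_pos hmk]
          have hkf : (k.factorial : ℝ) ≠ 0 := Nat.cast_ne_zero.2 k.factorial_ne_zero
          have hmf : (m.factorial : ℝ) ≠ 0 := Nat.cast_ne_zero.2 m.factorial_ne_zero
          field_simp
        · rw [if_neg hmk, mul_zero,
            psc_coeff_mul_pow_eq_zero hfbar0 h (show k < m by omega), zero_mul, mul_zero]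
      rw [Finset.sum_congr rfl hterm, ← Finset.mul_sum,
        ← psc_coeff_mul_psComp hf0 g (h * fbar ^ m) n, hkey2 m, PowerSeries.coeff_X_pow]
      by_cases hnm : n = m
      · subst hnm
        have hnf : (n.factorial : ℝ) ≠ 0 := Nat.cast_ne_zero.2 n.factorial_ne_zero
        simp [div_self hnf]
      · rw [if_neg hnm, if_neg (fun hh' => hnm hh'.symm), mul_zero]
    · rw [if_neg (by omega : ¬ m = n)]
      symm
      apply Finset.sum_eq_zero
      intro k hk
      rw [Finset.mem_range] at hk
      rw [hpc k m, if_neg (by omega), mul_zero]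
  -- conclude
  intro n
  rw [hXn n, map_sum]
  simp only [map_smul, smul_eq_mul]
  rw [Finset.sum_eq_single_of_mem 0 (Finset.mem_range.2 (by omega))]
  · rw [hL0, mul_one, pow_zero, mul_one, Nat.factorial_zero, Nat.cast_one, div_one]
  · intro k _ hk
    rw [hL k (by omega), mul_zero]
end

section
/- Let r ∈ ℝ. Let b_m = m!·[Xᵐ](exp(−rX + X²/2)), where exp(−rX + X²/2) ∈ ℝ[[X]] is the substitution of −rX + (1/2)X² into the exponential power series ∑_{m≥0} Xᵐ/m!, and define the polynomials q_n(X) = ∑_{k=0}^{n} C(n,k)·b_{n−k}·Xᵏ ∈ ℝ[X] (the polynomials whose coefficient array is the exponential Appell array [exp(−rX + X²/2), X] = [exp(rX − X²/2), X]⁻¹). Then q_0 = 1, q_1 = X − r, and for all n ≥ 1, q_{n+1} = (X − r)·q_n + n·q_{n−1}. These are the orthogonal polynomials whose moments are the probabilists' Hermite polynomial values He_n(r). -/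
open PowerSeries

open PowerSeries

noncomputable def myU (r : ℝ) : PowerSeries ℝ :=
  - PowerSeries.C (R := ℝ) r * PowerSeries.X + PowerSeries.C (R := ℝ) (1 / 2) * PowerSeries.X ^ 2

lemma coeff_myU_pow (r : ℝ) {m k : ℕ} (h : m < k) :
    coeff (R := ℝ) m ((myU r) ^ k) = 0 := by
  have h2 : (myU r) ^ k = (- C (R := ℝ) r + C (R := ℝ) (1/2) * X) ^ k * X ^ k := by
    rw [show myU r = (- C (R := ℝ) r + C (R := ℝ) (1/2) * X) * X by unfold myU; ring, mul_pow]
  rw [h2, coeff_mul_X_pow', if_neg (by omega)]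

lemma D_myU (r : ℝ) : d⁄dX ℝ (myU r) = - C (R := ℝ) r + X := by
  have h2 : (C (R := ℝ) (1/2) : ℝ⟦X⟧) * 2 = 1 := by
    rw [show (2 : ℝ⟦X⟧) = C (R := ℝ) 2 by rw [map_ofNat], ← map_mul]
    norm_num
  unfold myU
  rw [map_add, Derivation.leibniz, Derivation.leibniz, Derivation.leibniz_pow]
  simp only [derivative_X, derivative_C, smul_eq_mul, smul_zero, mul_one, zero_add, add_zero,
    mul_zero, zero_mul, map_neg, neg_zero, pow_one, nsmul_eq_mul, Nat.cast_ofNat]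
  norm_num
  rw [show (C (R := ℝ) (1/2) : ℝ⟦X⟧) * (2 * X) = (C (R := ℝ) (1/2) * 2) * X by ring, h2, one_mul]

lemma key (r : ℝ) (k n : ℕ) :
    coeff (R := ℝ) (n+1) (myU r ^ (k+1)) * (n+1) =
      (k+1 : ℝ) * (-(r * coeff (R := ℝ) n (myU r ^ k)) + coeff (R := ℝ) n (myU r ^ k * X)) := by
  have h1 := coeff_derivative (myU r ^ (k+1)) n
  rw [← h1, Derivation.leibniz_pow, D_myU]
  have : (myU r ^ (k+1-1)) • (- C (R := ℝ) r + X) = -(C (R := ℝ) r * myU r ^ k) + myU r ^ k * X := by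
    simp only [Nat.add_sub_cancel, smul_eq_mul]; ring
  rw [this, map_nsmul, nsmul_eq_mul, map_add, map_neg, coeff_C_mul]
  push_cast
  ring


noncomputable def myE (r : ℝ) : PowerSeries ℝ := psComp (PowerSeries.exp ℝ) (myU r)

lemma coeff_psComp (h u : PowerSeries ℝ) (n : ℕ) :
    coeff (R := ℝ) n (psComp h u) = ∑ k ∈ Finset.range (n + 1), coeff (R := ℝ) k h * coeff (R := ℝ) n (u ^ k) := by
  rw [psComp, coeff_mk]

lemma exp_coeff_succ_mul (j : ℕ) :
    coeff (R := ℝ) (j+1) (exp ℝ) * (j+1) = coeff (R := ℝ) j (exp ℝ) := by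
  rw [coeff_exp, coeff_exp]
  rw [show ((j:ℝ)+1) = algebraMap ℚ ℝ ((j:ℚ)+1) by push_cast; simp, ← map_mul]
  congr 1
  rw [Nat.factorial_succ]
  push_cast
  have h0 : (j.factorial : ℚ) ≠ 0 := by exact_mod_cast j.factorial_ne_zero
  field_simp

lemma crec (r : ℝ) (n : ℕ) :
    coeff (R := ℝ) (n+2) (myE r) * ((n:ℝ)+2) =
      -(r * coeff (R := ℝ) (n+1) (myE r)) + coeff (R := ℝ) n (myE r) := by
  rw [myE, coeff_psComp, Finset.sum_mul, Finset.sum_range_succ']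
  have h0 : coeff (R := ℝ) 0 (exp ℝ) * coeff (R := ℝ) (n+2) ((myU r)^0) * ((n:ℝ)+2) = 0 := by
    simp
  rw [h0, add_zero]
  have hcong : ∀ i ∈ Finset.range (n+2),
      coeff (R := ℝ) (i+1) (exp ℝ) * coeff (R := ℝ) (n+2) ((myU r)^(i+1)) * ((n:ℝ)+2) =
      -(r * (coeff (R := ℝ) i (exp ℝ) * coeff (R := ℝ) (n+1) ((myU r)^i)))
        + coeff (R := ℝ) i (exp ℝ) * coeff (R := ℝ) n ((myU r)^i) := by
    intro i _
    have hk := key r i (n+1)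
    push_cast at hk
    have : coeff (R := ℝ) (i+1) (exp ℝ) * coeff (R := ℝ) (n+2) ((myU r)^(i+1)) * ((n:ℝ)+2)
        = (coeff (R := ℝ) (i+1) (exp ℝ) * ((i:ℝ)+1)) *
          (-(r * coeff (R := ℝ) (n+1) ((myU r)^i)) + coeff (R := ℝ) (n+1) ((myU r)^i * X)) := by
      rw [show coeff (R := ℝ) (i+1) (exp ℝ) * coeff (R := ℝ) (n+2) ((myU r)^(i+1)) * ((n:ℝ)+2)
          = coeff (R := ℝ) (i+1) (exp ℝ) * (coeff (R := ℝ) (n+2) ((myU r)^(i+1)) * ((n:ℝ)+2)) by ring]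
      rw [show ((n:ℝ)+2) = ((n:ℝ)+1+1) by ring, hk]
      ring
    rw [this]
    have he := exp_coeff_succ_mul i
    push_cast at he
    rw [he, coeff_succ_mul_X]
    ring
  rw [Finset.sum_congr rfl hcong, Finset.sum_add_distrib]
  congr 1
  · rw [coeff_psComp, Finset.mul_sum, ← Finset.sum_neg_distrib]
  · rw [coeff_psComp, Finset.sum_range_succ,
      coeff_myU_pow r (by omega : n < n+1), mul_zero, add_zero]

lemma myE0 (r : ℝ) : coeff (R := ℝ) 0 (myE r) = 1 := by
  simp [myE, myU, coeff_psComp, coeff_exp]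

lemma myE1 (r : ℝ) : coeff (R := ℝ) 1 (myE r) = -r := by
  simp [myE, myU, coeff_psComp, Finset.sum_range_succ, coeff_exp, coeff_one, coeff_X_pow]

lemma choose_id (m j : ℕ) :
    ((m - j : ℕ) : ℝ) * (((m+1).choose (j+1) : ℕ) : ℝ)
      = ((m:ℝ)+1) * ((m.choose (j+1) : ℕ) : ℝ) := by
  have hnat : (m - j) * (m+1).choose (j+1) = (m+1) * m.choose (j+1) := by
    calc (m - j) * (m+1).choose (j+1) = (m+1).choose (j+1) * ((m+1) - (j+1)) := by
          rw [mul_comm]; congr 1; omega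
    _ = (m+1).choose (j+1+1) * (j+1+1) := (Nat.choose_succ_right_eq _ _).symm
    _ = (m+1) * m.choose (j+1) := (Nat.add_one_mul_choose_eq m (j+1)).symm
  exact_mod_cast hnat

/-- The polynomials whose coefficient array is the exponential Appell array
`[exp(−rx + x²/2), x] = [exp(rx − x²/2), x]⁻¹` satisfy the three-term recurrence
`q₀ = 1`, `q₁ = x − r`, `qₙ₊₁ = (x − r)·qₙ + n·qₙ₋₁`; these are the orthogonal
polynomials whose moments are the probabilists' Hermite polynomial values `Heₙ(r)`. -/
theorem hermite_moment_orthogonal_recurrence (r : ℝ) (b : ℕ → ℝ)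
    (hb : ∀ m, b m = (m.factorial : ℝ) * PowerSeries.coeff (R := ℝ) m
      (psComp (PowerSeries.exp ℝ)
        (- PowerSeries.C (R := ℝ) r * PowerSeries.X + PowerSeries.C (R := ℝ) (1 / 2) * PowerSeries.X ^ 2)))
    (q : ℕ → Polynomial ℝ)
    (hq : ∀ n, q n = ∑ k ∈ Finset.range (n + 1),
      Polynomial.C ((n.choose k : ℝ) * b (n - k)) * Polynomial.X ^ k) :
    q 0 = 1 ∧
    q 1 = Polynomial.X - Polynomial.C r ∧
    (∀ n : ℕ, 1 ≤ n →
      q (n + 1) = (Polynomial.X - Polynomial.C r) * q n + Polynomial.C (n : ℝ) * q (n - 1)) := by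
  have hb' : ∀ m, b m = (m.factorial : ℝ) * coeff (R := ℝ) m (myE r) := hb
  have hb0 : b 0 = 1 := by rw [hb' 0, myE0]; simp
  have hb1 : b 1 = -r := by rw [hb' 1, myE1]; simp
  have hbrec : ∀ n : ℕ, b (n+2) = -(r * b (n+1)) + ((n:ℝ)+1) * b n := by
    intro n
    have hc := crec r n
    rw [hb' (n+2), hb' (n+1), hb' n]
    calc ((n+2).factorial : ℝ) * coeff (R := ℝ) (n+2) (myE r)
        = ((n+1).factorial : ℝ) * (coeff (R := ℝ) (n+2) (myE r) * ((n:ℝ)+2)) := by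
          rw [Nat.factorial_succ (n+1)]; push_cast; ring
      _ = ((n+1).factorial : ℝ) * (-(r * coeff (R := ℝ) (n+1) (myE r)) + coeff (R := ℝ) n (myE r)) := by
          rw [hc]
      _ = -(r * (((n+1).factorial : ℝ) * coeff (R := ℝ) (n+1) (myE r)))
            + ((n:ℝ)+1) * ((n.factorial : ℝ) * coeff (R := ℝ) n (myE r)) := by
          rw [Nat.factorial_succ n]; push_cast; ring
  have hstep : ∀ t : ℕ, b (t+1) = -(r * b t) + (t:ℝ) * b (t-1) := by
    intro t
    cases t with
    | zero => simp [hb1, hb0]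
    | succ s => have := hbrec s; push_cast at this ⊢; simpa using this
  have qc : ∀ n j, (q n).coeff j = if j ≤ n then (n.choose j : ℝ) * b (n - j) else 0 := by
    intro n j
    rw [hq n, Polynomial.finset_sum_coeff]
    simp only [Polynomial.coeff_C_mul, Polynomial.coeff_X_pow, mul_ite, mul_one, mul_zero]
    rw [Finset.sum_ite_eq (Finset.range (n+1)) j]
    simp [Nat.lt_succ_iff]
  refine ⟨?_, ?_, ?_⟩
  · rw [hq 0]; simp [hb0]
  · rw [hq 1]
    simp [Finset.sum_range_succ, hb0, hb1, sub_eq_add_neg, add_comm]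
  · intro n hn
    cases n with
    | zero => omega
    | succ m =>
      apply Polynomial.ext
      intro j
      simp only [Nat.add_sub_cancel]
      rw [sub_mul]
      cases j with
      | zero =>
        simp only [Polynomial.coeff_add, Polynomial.coeff_sub, Polynomial.mul_coeff_zero,
          Polynomial.coeff_X_zero, zero_mul, Polynomial.coeff_C_zero, Polynomial.coeff_C_mul]
        rw [qc, qc, qc]
        rw [if_pos (by omega), if_pos (by omega), if_pos (by omega)]
        simp only [Nat.choose_zero_right, Nat.cast_one, one_mul, Nat.sub_zero]
        have := hbrec m
        push_cast at this ⊢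
        rw [this]; ring
      | succ j =>
        simp only [Polynomial.coeff_add, Polynomial.coeff_sub, Polynomial.coeff_X_mul,
          Polynomial.coeff_C_mul]
        rw [qc, qc, qc, qc]
        rcases Nat.lt_or_ge j m with h | h
        · rw [if_pos (by omega), if_pos (by omega), if_pos (by omega), if_pos (by omega)]
          have hidx1 : m + 2 - (j+1) = (m - j) + 1 := by omega
          have hidx2 : m + 1 - j = (m - j) + 1 := by omega
          have hidx3 : m + 1 - (j+1) = m - j := by omega
          have hidx4 : m - (j+1) = (m - j) - 1 := by omega
          have hch : (((m+2).choose (j+1) : ℕ) : ℝ)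
              = ((m+1).choose j : ℕ) + (((m+1).choose (j+1) : ℕ) : ℝ) := by
            exact_mod_cast Nat.choose_succ_succ (m+1) j
          rw [hidx1, hidx2, hidx3, hidx4, hch, hstep (m - j)]
          have hcid := choose_id m j
          push_cast at hcid ⊢
          linear_combination b ((m - j) - 1) * hcid
        · by_cases hj1 : j = m
          · subst hj1
            rw [if_pos (by omega), if_pos (by omega), if_pos (by omega), if_neg (by omega)]
            simp only [show j + 2 - (j+1) = 1 by omega, show j + 1 - j = 1 by omega,
              show j + 1 - (j+1) = 0 by omega, Nat.choose_succ_self_right, Nat.choose_self,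
              hb0, hb1]
            push_cast; ring
          · by_cases hj2 : j = m + 1
            · subst hj2
              rw [if_pos (by omega), if_pos (by omega), if_neg (by omega), if_neg (by omega)]
              simp [show m + 2 - (m + 1 + 1) = 0 by omega, show m + 1 - (m+1) = 0 by omega,
                Nat.choose_self, hb0]
            · rw [if_neg (by omega), if_neg (by omega), if_neg (by omega), if_neg (by omega)]
              ring
end
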